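/- Let a = (a₁,a₂,a₃) ∈ (ℤ∖{0})³ and let α = (α₁,α₂,α₃), β = (β₁,β₂,β₃) ∈ ℂ³ satisfy Re(αᵢ) > 2/3 and Re(βᵢ) > 2/3 for all i ∈ {1,2,3}. Then the series 𝒜_a(α,β) := (1/8) Σ over (n₁,n₂,n₃,m₁,m₂,m₃) ∈ (ℤ∖{0})⁶ with a₁n₁m₁ + a₂n₂m₂ + a₃n₃m₃ = 0 of 1/(|n₁|^{α₁}|m₁|^{β₁}|n₂|^{α₂}|m₂|^{β₂}|n₃|^{α₃}|m₃|^{β₃}) converges absolutely; i.e., the family of terms indexed by this solution set is summable. -/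

import Mathlib

open Finset

lemma aux_pow_bound {δ : ℝ} (hδ : 0 < δ) {M : ℝ} (hM1 : 1 ≤ M)
    (hM2 : 1 / (δ * Real.log 2) ≤ M) (a : ℕ) :
    (a + 1 : ℝ) ≤ M * (2 : ℝ) ^ ((a : ℝ) * δ) := by
  have hlog : 0 < Real.log 2 := Real.log_pos one_lt_two
  have h2 : (2 : ℝ) ^ ((a : ℝ) * δ) = Real.exp (Real.log 2 * ((a : ℝ) * δ)) := by
    rw [Real.rpow_def_of_pos two_pos]
  rw [h2]
  have h3 : Real.log 2 * ((a : ℝ) * δ) + 1 ≤ Real.exp (Real.log 2 * ((a : ℝ) * δ)) :=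
    Real.add_one_le_exp _
  have ha0 : (0:ℝ) ≤ (a : ℝ) := Nat.cast_nonneg a
  have hMδ : 1 ≤ M * (δ * Real.log 2) := by
    rw [div_le_iff₀ (by positivity)] at hM2
    linarith
  nlinarith [mul_le_mul_of_nonneg_left h3 (le_trans zero_le_one hM1),
    mul_le_mul_of_nonneg_right hMδ ha0]

lemma divisor_bound {δ : ℝ} (hδ : 0 < δ) :
    ∃ C : ℝ, 1 ≤ C ∧ ∀ n : ℕ, n ≠ 0 → (n.divisors.card : ℝ) ≤ C * (n : ℝ) ^ δ := by
  classical
  set M : ℝ := max 1 (1 / (δ * Real.log 2)) with hMdef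
  have hM1 : 1 ≤ M := le_max_left _ _
  have hM0 : 0 ≤ M := le_trans zero_le_one hM1
  set K : ℕ := ⌈(2 : ℝ) ^ (1 / δ)⌉₊ with hKdef
  refine ⟨M ^ (K + 1), one_le_pow₀ hM1, fun n hn => ?_⟩
  have hcard : (n.divisors.card : ℝ) = ∏ p ∈ n.primeFactors, ((n.factorization p : ℝ) + 1) := by
    rw [Nat.card_divisors hn]
    push_cast
    rfl
  have hnprod : (∏ p ∈ n.primeFactors, (p : ℝ) ^ (n.factorization p : ℕ)) = (n : ℝ) := by
    rw_mod_cast [← Nat.prod_factorization_eq_prod_primeFactors (· ^ ·),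
      Nat.factorization_prod_pow_eq_self hn]
  have hfact : (n : ℝ) ^ δ
      = ∏ p ∈ n.primeFactors, ((p : ℝ) ^ (n.factorization p : ℕ)) ^ δ := by
    rw [Real.finset_prod_rpow _ _ (fun p _ => by positivity) δ, hnprod]
  -- pointwise bound
  have hpoint : ∀ p ∈ n.primeFactors,
      ((n.factorization p : ℝ) + 1)
        ≤ (if p ≤ K then M else 1) * ((p : ℝ) ^ (n.factorization p : ℕ)) ^ δ := by
    intro p hp
    have hpp : p.Prime := Nat.prime_of_mem_primeFactors hp
    have hp2 : (2 : ℝ) ≤ (p : ℝ) := by exact_mod_cast hpp.two_le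
    have hp0 : (0 : ℝ) < (p : ℝ) := by linarith
    set a : ℕ := n.factorization p with ha
    have hrw : ((p : ℝ) ^ (a : ℕ)) ^ δ = (p : ℝ) ^ ((a : ℝ) * δ) := by
      rw [← Real.rpow_natCast (p : ℝ) a, ← Real.rpow_mul (le_of_lt hp0)]
    rw [hrw]
    by_cases hK : p ≤ K
    · simp only [hK, if_true]
      calc ((a : ℝ) + 1) ≤ M * (2 : ℝ) ^ ((a : ℝ) * δ) :=
            aux_pow_bound hδ hM1 (le_max_right _ _) a
        _ ≤ M * (p : ℝ) ^ ((a : ℝ) * δ) := by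
            apply mul_le_mul_of_nonneg_left _ hM0
            exact Real.rpow_le_rpow (by norm_num) hp2 (by positivity)
    · simp only [hK, if_false, one_mul]
      -- p > K : (p:ℝ)^δ ≥ 2
      have hpK : ((2:ℝ) ^ (1/δ)) ≤ (p : ℝ) := by
        have h1 : ((2:ℝ) ^ (1/δ)) ≤ (K : ℝ) + 1 := by
          have := Nat.le_ceil ((2:ℝ) ^ (1/δ))
          rw [← hKdef] at this
          linarith
        have h2 : (K : ℝ) + 1 ≤ (p : ℝ) := by
          have : K + 1 ≤ p := by omega
          exact_mod_cast this
        linarith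
      have hpδ : (2 : ℝ) ≤ (p : ℝ) ^ δ := by
        have := Real.rpow_le_rpow (by positivity) hpK (le_of_lt hδ)
        rwa [← Real.rpow_mul (by norm_num : (0:ℝ) ≤ 2), one_div_mul_cancel (ne_of_gt hδ),
          Real.rpow_one] at this
      have h1 : ((a : ℝ) + 1) ≤ (2 : ℝ) ^ (a : ℕ) := by
        have := Nat.lt_two_pow_self (n := a)
        have h2 : (a + 1 : ℕ) ≤ 2 ^ a := this
        exact_mod_cast h2
      calc ((a : ℝ) + 1) ≤ (2 : ℝ) ^ (a : ℕ) := h1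
        _ ≤ ((p : ℝ) ^ δ) ^ (a : ℕ) := pow_le_pow_left₀ (by norm_num) hpδ a
        _ = (p : ℝ) ^ ((a : ℝ) * δ) := by
            rw [← Real.rpow_natCast ((p:ℝ) ^ δ) a, ← Real.rpow_mul (le_of_lt hp0), mul_comm]
  -- combine
  have hprodle : (n.divisors.card : ℝ)
      ≤ (∏ p ∈ n.primeFactors, (if p ≤ K then M else 1))
        * (∏ p ∈ n.primeFactors, ((p : ℝ) ^ (n.factorization p : ℕ)) ^ δ) := by
    rw [hcard, ← Finset.prod_mul_distrib]
    apply Finset.prod_le_prod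
    · intro p hp; positivity
    · exact hpoint
  have hCle : (∏ p ∈ n.primeFactors, (if p ≤ K then M else 1)) ≤ M ^ (K + 1) := by
    rw [← Finset.prod_filter]
    rw [Finset.prod_const]
    apply pow_le_pow_right₀ hM1
    calc (n.primeFactors.filter (· ≤ K)).card ≤ (Finset.range (K+1)).card := by
          apply Finset.card_le_card
          intro p hp
          simp only [Finset.mem_filter] at hp
          simp [Finset.mem_range]
          omega
      _ = K + 1 := Finset.card_range _
  calc (n.divisors.card : ℝ) ≤ _ := hprodle
    _ ≤ M ^ (K + 1) * (n : ℝ) ^ δ := by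
        rw [hfact]
        apply mul_le_mul_of_nonneg_right hCle
        positivity

open Finset

noncomputable def rp (t : ℝ) (n : ℤ) : ℝ := |(n : ℝ)| ^ (-t)

lemma rp_nonneg (t : ℝ) (n : ℤ) : 0 ≤ rp t n := Real.rpow_nonneg (abs_nonneg _) _

lemma rp_mul (t : ℝ) (a b : ℤ) : rp t a * rp t b = |((a * b : ℤ) : ℝ)| ^ (-t) := by
  unfold rp
  rw [show |((a * b : ℤ) : ℝ)| = |(a : ℝ)| * |(b : ℝ)| by push_cast [abs_mul]; ring,
    Real.mul_rpow (abs_nonneg _) (abs_nonneg _)]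

open Classical in
noncomputable def Fc (a₁ a₂ a₃ : ℤ) (σ : ℝ) (q : ((ℤ × ℤ) × (ℤ × ℤ)) × (ℤ × ℤ)) : ℝ :=
  if (q.1.1.1 ≠ 0 ∧ q.1.1.2 ≠ 0 ∧ q.1.2.1 ≠ 0 ∧ q.1.2.2 ≠ 0 ∧ q.2.1 ≠ 0 ∧ q.2.2 ≠ 0 ∧
      a₁ * q.1.1.1 * q.1.1.2 + a₂ * q.1.2.1 * q.1.2.2 + a₃ * q.2.1 * q.2.2 = 0 ∧
      |a₁ * q.1.1.1 * q.1.1.2| ≤ |a₃ * q.2.1 * q.2.2| ∧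
      |a₂ * q.1.2.1 * q.1.2.2| ≤ |a₃ * q.2.1 * q.2.2|)
  then rp σ q.1.1.1 * rp σ q.1.1.2 * rp σ q.1.2.1 * rp σ q.1.2.2 * rp σ q.2.1 * rp σ q.2.2
  else 0

lemma Fc_nonneg (a₁ a₂ a₃ : ℤ) (σ : ℝ) (q) : 0 ≤ Fc a₁ a₂ a₃ σ q := by
  unfold Fc
  split
  · exact mul_nonneg (mul_nonneg (mul_nonneg (mul_nonneg (mul_nonneg
      (rp_nonneg _ _) (rp_nonneg _ _)) (rp_nonneg _ _)) (rp_nonneg _ _))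
      (rp_nonneg _ _)) (rp_nonneg _ _)
  · exact le_refl 0

lemma Fc_cond {a₁ a₂ a₃ : ℤ} {σ : ℝ} {q} (h : Fc a₁ a₂ a₃ σ q ≠ 0) :
    q.1.1.1 ≠ 0 ∧ q.1.1.2 ≠ 0 ∧ q.1.2.1 ≠ 0 ∧ q.1.2.2 ≠ 0 ∧ q.2.1 ≠ 0 ∧ q.2.2 ≠ 0 ∧
      a₁ * q.1.1.1 * q.1.1.2 + a₂ * q.1.2.1 * q.1.2.2 + a₃ * q.2.1 * q.2.2 = 0 ∧
      |a₁ * q.1.1.1 * q.1.1.2| ≤ |a₃ * q.2.1 * q.2.2| ∧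
      |a₂ * q.1.2.1 * q.1.2.2| ≤ |a₃ * q.2.1 * q.2.2| := by
  by_contra hc
  exact h (by unfold Fc; rw [if_neg hc])

lemma Fc_val {a₁ a₂ a₃ : ℤ} {σ : ℝ} {q} (h : Fc a₁ a₂ a₃ σ q ≠ 0) :
    Fc a₁ a₂ a₃ σ q
      = rp σ q.1.1.1 * rp σ q.1.1.2 * rp σ q.1.2.1 * rp σ q.1.2.2 * rp σ q.2.1 * rp σ q.2.2 := by
  unfold Fc
  rw [if_pos (Fc_cond h)]

lemma abs_cast_mul (a b : ℤ) : |((a * b : ℤ) : ℝ)| = |(a : ℝ)| * |(b : ℝ)| := by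
  push_cast [abs_mul]; ring

lemma one_le_abs_cast {n : ℤ} (hn : n ≠ 0) : (1 : ℝ) ≤ |(n : ℝ)| := by
  have := Int.one_le_abs hn
  rw [← Int.cast_abs]
  exact_mod_cast this

set_option maxHeartbeats 2000000 in
lemma core_summable (a₁ a₂ a₃ : ℤ) (ha₁ : a₁ ≠ 0) (ha₂ : a₂ ≠ 0) (ha₃ : a₃ ≠ 0)
    (σ : ℝ) (hσ : 2 / 3 < σ) :
    Summable (Fc a₁ a₂ a₃ σ) := by
  classical
  have hσ0 : 0 < σ := by linarith
  set δ : ℝ := min σ (3 * σ - 2) / 2 with hδdef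
  have hδ0 : 0 < δ := by
    have h1 : 0 < min σ (3 * σ - 2) := lt_min (by linarith) (by linarith)
    rw [hδdef]; linarith
  have hδσ : δ < σ := by
    have h1 : min σ (3 * σ - 2) ≤ σ := min_le_left _ _
    rw [hδdef]; linarith
  set s : ℝ := (3 * σ - δ) / 2 with hsdef
  have hs1 : 1 < s := by
    have h1 : min σ (3 * σ - 2) ≤ 3 * σ - 2 := min_le_right _ _
    rw [hsdef, hδdef]; linarith
  obtain ⟨C, hC1, hC⟩ := divisor_bound hδ0
  set A : ℝ := |(a₃ : ℝ)| with hAdef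
  have hA0 : (0 : ℝ) < A := abs_pos.mpr (Int.cast_ne_zero.mpr ha₃)
  -- the support box
  set c : (ℤ × ℤ) × (ℤ × ℤ) → ℤ := fun x => a₁ * x.1.1 * x.1.2 + a₂ * x.2.1 * x.2.2 with hcdef
  set box : (ℤ × ℤ) × (ℤ × ℤ) → Finset (ℤ × ℤ) :=
    fun x => Finset.Icc (-|c x|) |c x| ×ˢ Finset.Icc (-|c x|) |c x| with hboxdef
  have hsupp : ∀ x y, Fc a₁ a₂ a₃ σ (x, y) ≠ 0 → y ∈ box x := by
    intro x y h
    obtain ⟨-, -, -, -, hy1, hy2, heq, -, -⟩ := Fc_cond h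
    dsimp only at hy1 hy2 heq
    have h1 : a₃ * (y.1 * y.2) = -(c x) := by
      rw [hcdef]; dsimp only; linear_combination heq
    have h2 : |c x| = |a₃| * (|y.1| * |y.2|) := by
      rw [← abs_neg (c x), ← h1, abs_mul, abs_mul]
    have ha := Int.one_le_abs ha₃
    have hb := Int.one_le_abs hy1
    have hc' := Int.one_le_abs hy2
    have hprodle : |y.1| * |y.2| ≤ |c x| := by
      rw [h2]; exact le_mul_of_one_le_left (by positivity) ha
    have hy1b : |y.1| ≤ |c x| :=
      le_trans (le_mul_of_one_le_right (abs_nonneg _) hc') hprodle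
    have hy2b : |y.2| ≤ |c x| :=
      le_trans (le_mul_of_one_le_left (abs_nonneg _) hb) hprodle
    rw [hboxdef]
    simp only [Finset.mem_product, Finset.mem_Icc]
    exact ⟨⟨neg_le_of_abs_le hy1b, le_of_abs_le hy1b⟩,
      ⟨neg_le_of_abs_le hy2b, le_of_abs_le hy2b⟩⟩
  have hF0 : ∀ q, 0 ≤ Fc a₁ a₂ a₃ σ q := Fc_nonneg a₁ a₂ a₃ σ
  rw [summable_prod_of_nonneg (fun q => hF0 q)]
  constructor
  · intro x
    exact summable_of_ne_finset_zero (s := box x)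
      (fun y hy => by by_contra h; exact hy (hsupp x y h))
  · -- the heavy part
    set H : (ℤ × ℤ) × (ℤ × ℤ) → ℝ :=
      fun x => 2 * C * A ^ σ *
        ((rp s x.1.1 * rp s x.1.2) * (rp s x.2.1 * rp s x.2.2)) with hHdef
    have hHsum : Summable H := by
      have h1 : Summable (fun n : ℤ => rp s n) := by
        unfold rp; exact Real.summable_abs_int_rpow hs1
      have h2 : Summable (fun p : ℤ × ℤ => rp s p.1 * rp s p.2) :=
        h1.mul_of_nonneg h1 (fun n => rp_nonneg _ _) (fun n => rp_nonneg _ _)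
      have h3 : Summable (fun p : (ℤ × ℤ) × (ℤ × ℤ) =>
          (rp s p.1.1 * rp s p.1.2) * (rp s p.2.1 * rp s p.2.2)) :=
        h2.mul_of_nonneg h2 (fun p => mul_nonneg (rp_nonneg _ _) (rp_nonneg _ _))
          (fun p => mul_nonneg (rp_nonneg _ _) (rp_nonneg _ _))
      exact h3.mul_left _
    apply Summable.of_nonneg_of_le (fun x => tsum_nonneg (fun y => hF0 (x, y))) _ hHsum
    intro x
    have hH0 : 0 ≤ H x := by
      simp only [hHdef]
      have h5 : (0:ℝ) ≤ A ^ σ := Real.rpow_nonneg hA0.le _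
      have h4 : (0:ℝ) ≤ rp s x.1.1 * rp s x.1.2 * (rp s x.2.1 * rp s x.2.2) :=
        mul_nonneg (mul_nonneg (rp_nonneg _ _) (rp_nonneg _ _))
          (mul_nonneg (rp_nonneg _ _) (rp_nonneg _ _))
      exact mul_nonneg (mul_nonneg (mul_nonneg (by norm_num) (by linarith)) h5) h4
    by_cases hex : ∃ y : ℤ × ℤ, Fc a₁ a₂ a₃ σ (x, y) ≠ 0
    swap
    · push_neg at hex
      calc ∑' y, Fc a₁ a₂ a₃ σ (x, y) = ∑' _ : ℤ × ℤ, (0:ℝ) := tsum_congr fun y => hex y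
        _ = 0 := tsum_zero
        _ ≤ H x := hH0
    obtain ⟨y₀, hy₀⟩ := hex
    obtain ⟨hn1, hm1, hn2, hm2, hy01, hy02, heq0, hle1, hle2⟩ := Fc_cond hy₀
    dsimp only at hn1 hm1 hn2 hm2 hy01 hy02 heq0 hle1 hle2
    -- basic quantities
    have hceq : a₃ * (y₀.1 * y₀.2) = -(c x) := by
      rw [hcdef]; dsimp only; linear_combination heq0
    have hcabs : |c x| = |a₃| * (|y₀.1| * |y₀.2|) := by
      rw [← abs_neg (c x), ← hceq, abs_mul, abs_mul]
    have hc0 : c x ≠ 0 := by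
      have ha := Int.one_le_abs ha₃
      have hb := Int.one_le_abs hy01
      have hc' := Int.one_le_abs hy02
      have h1 : 1 ≤ |c x| := by
        rw [hcabs]
        have hbc : 1 ≤ |y₀.1| * |y₀.2| := by nlinarith
        nlinarith
      intro h; rw [h] at h1; simp at h1
    set B : ℕ := (c x).natAbs with hBdef
    have hB0 : B ≠ 0 := Int.natAbs_ne_zero.mpr hc0
    have hBc : ((B : ℕ) : ℝ) = |((c x : ℤ) : ℝ)| := by
      rw [hBdef, Nat.cast_natAbs, Int.cast_abs]
    have hB1 : (1:ℝ) ≤ (B:ℝ) := by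
      have : 1 ≤ B := Nat.one_le_iff_ne_zero.mpr hB0
      exact_mod_cast this
    have hBpos : (0:ℝ) < (B:ℝ) := by linarith
    -- the filtered set
    set T : Finset (ℤ × ℤ) := (box x).filter (fun y => Fc a₁ a₂ a₃ σ (x, y) ≠ 0) with hTdef
    -- per-element bound
    set bound : ℝ := rp σ x.1.1 * rp σ x.1.2 * rp σ x.2.1 * rp σ x.2.2 *
      ((B:ℝ) ^ (-σ) * A ^ σ) with hbounddef
    have hbound0 : 0 ≤ bound := by
      rw [hbounddef]
      exact mul_nonneg (mul_nonneg (mul_nonneg (mul_nonneg (rp_nonneg _ _) (rp_nonneg _ _))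
        (rp_nonneg _ _)) (rp_nonneg _ _))
        (mul_nonneg (Real.rpow_nonneg hBpos.le _) (Real.rpow_nonneg hA0.le _))
    have hper : ∀ y ∈ T, Fc a₁ a₂ a₃ σ (x, y) ≤ bound := by
      intro y hy
      rw [hTdef, Finset.mem_filter] at hy
      obtain ⟨-, hyne⟩ := hy
      obtain ⟨-, -, -, -, hy1, hy2, heqy, -, -⟩ := Fc_cond hyne
      dsimp only at hy1 hy2 heqy
      have h1 : a₃ * (y.1 * y.2) = -(c x) := by
        rw [hcdef]; dsimp only; linear_combination heqy
      have h2 : A * |((y.1 * y.2 : ℤ) : ℝ)| = (B:ℝ) := by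
        rw [hAdef, ← abs_cast_mul, h1, hBc]
        push_cast
        rw [abs_neg]
      have hXeq : |((y.1 * y.2 : ℤ) : ℝ)| = (B:ℝ) / A := by
        field_simp [← h2]
        linear_combination h2
      have hXr : |((y.1 * y.2 : ℤ) : ℝ)| ^ (-σ) = (B:ℝ) ^ (-σ) * A ^ σ := by
        rw [hXeq, Real.div_rpow hBpos.le hA0.le, Real.rpow_neg hA0.le, div_eq_mul_inv,
          inv_inv]
      have hval := Fc_val hyne
      dsimp only at hval
      rw [hval]
      apply le_of_eq
      calc rp σ x.1.1 * rp σ x.1.2 * rp σ x.2.1 * rp σ x.2.2 * rp σ y.1 * rp σ y.2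
          = rp σ x.1.1 * rp σ x.1.2 * rp σ x.2.1 * rp σ x.2.2 * (rp σ y.1 * rp σ y.2) := by
            ring
        _ = rp σ x.1.1 * rp σ x.1.2 * rp σ x.2.1 * rp σ x.2.2 *
              (|((y.1 * y.2 : ℤ) : ℝ)| ^ (-σ)) := by rw [rp_mul σ y.1 y.2]
        _ = bound := by rw [hXr, hbounddef]
    -- cardinality bound
    set Ds : Finset ℤ := B.divisors.image (fun d : ℕ => (d : ℤ)) ∪
      B.divisors.image (fun d : ℕ => -(d : ℤ)) with hDsdef
    have hTcard : (T.card : ℝ) ≤ 2 * (B.divisors.card : ℝ) := by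
      have hmap : ∀ y ∈ T, y.1 ∈ Ds := by
        intro y hy
        rw [hTdef, Finset.mem_filter] at hy
        obtain ⟨-, hyne⟩ := hy
        obtain ⟨-, -, -, -, hy1, hy2, heqy, -, -⟩ := Fc_cond hyne
        dsimp only at hy1 hy2 heqy
        have hdvd : y.1 ∣ c x := ⟨-(a₃ * y.2), by rw [hcdef]; dsimp only; linear_combination heqy⟩
        have hdvdn : y.1.natAbs ∣ B := by
          rw [hBdef]; exact Int.natAbs_dvd_natAbs.mpr hdvd
        have hmem : y.1.natAbs ∈ B.divisors := Nat.mem_divisors.mpr ⟨hdvdn, hB0⟩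
        rw [hDsdef, Finset.mem_union]
        rcases Int.natAbs_eq y.1 with h | h
        · exact Or.inl (Finset.mem_image.mpr ⟨y.1.natAbs, hmem, h.symm⟩)
        · exact Or.inr (Finset.mem_image.mpr ⟨y.1.natAbs, hmem, h.symm⟩)
      have hinj : Set.InjOn (fun y : ℤ × ℤ => y.1) T := by
        intro y hy y' hy' h
        dsimp only at h
        rw [hTdef] at hy hy'
        rw [Finset.mem_coe, Finset.mem_filter] at hy hy'
        obtain ⟨-, hyne⟩ := hy
        obtain ⟨-, hyne'⟩ := hy'
        obtain ⟨-, -, -, -, hy1, hy2, heqy, -, -⟩ := Fc_cond hyne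
        obtain ⟨-, -, -, -, hy1', hy2', heqy', -, -⟩ := Fc_cond hyne'
        dsimp only at hy1 hy2 heqy hy1' hy2' heqy'
        rw [← h] at heqy'
        have h2 : a₃ * y.1 * y.2 = a₃ * y.1 * y'.2 := by linear_combination heqy - heqy'
        have h3 : y.2 = y'.2 := mul_left_cancel₀ (mul_ne_zero ha₃ hy1) h2
        exact Prod.ext h h3
      have h4 : T.card ≤ Ds.card := Finset.card_le_card_of_injOn _ hmap hinj
      have h5 : Ds.card ≤ 2 * B.divisors.card := by
        rw [hDsdef, two_mul]
        exact le_trans (Finset.card_union_le _ _)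
          (add_le_add Finset.card_image_le Finset.card_image_le)
      exact_mod_cast le_trans h4 h5
    -- real abs of the four base coordinates
    set x1 : ℝ := |(x.1.1 : ℝ)| with hx1def
    set x2 : ℝ := |(x.1.2 : ℝ)| with hx2def
    set x3 : ℝ := |(x.2.1 : ℝ)| with hx3def
    set x4 : ℝ := |(x.2.2 : ℝ)| with hx4def
    have hx1 : 1 ≤ x1 := one_le_abs_cast hn1
    have hx2 : 1 ≤ x2 := one_le_abs_cast hm1
    have hx3 : 1 ≤ x3 := one_le_abs_cast hn2
    have hx4 : 1 ≤ x4 := one_le_abs_cast hm2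
    set Pr : ℝ := x1 * x2 * x3 * x4 with hPrdef
    have hPr1 : 1 ≤ Pr := by
      rw [hPrdef]
      have ha' : 1 ≤ x1 * x2 := by nlinarith
      have hb' : 1 ≤ x1 * x2 * x3 := by nlinarith
      nlinarith
    have hPr0 : 0 < Pr := by linarith
    have hP4 : ∀ t : ℝ, Pr ^ (-t) = rp t x.1.1 * rp t x.1.2 * rp t x.2.1 * rp t x.2.2 := by
      intro t
      rw [hPrdef]
      unfold rp
      rw [Real.mul_rpow (by positivity) (by positivity),
        Real.mul_rpow (by positivity) (by positivity),
        Real.mul_rpow (by positivity) (by positivity)]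
    -- B dominates the products
    have hcB1 : x1 * x2 ≤ (B:ℝ) := by
      have h6 : |x.1.1| * |x.1.2| ≤ |c x| := by
        have h7 : |a₁ * x.1.1 * x.1.2| ≤ |c x| := by
          have : |a₃ * y₀.1 * y₀.2| = |c x| := by
            rw [← abs_neg (c x), ← hceq]; ring_nf
          rw [← this]; exact hle1
        have := Int.one_le_abs ha₁
        have h8 : |a₁ * x.1.1 * x.1.2| = |a₁| * (|x.1.1| * |x.1.2|) := by
          rw [abs_mul, abs_mul]; ring
        have h9 : |x.1.1| * |x.1.2| ≤ |a₁| * (|x.1.1| * |x.1.2|) :=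
          le_mul_of_one_le_left (by positivity) this
        linarith
      rw [hBc, hx1def, hx2def, ← Int.cast_abs, ← Int.cast_abs, ← Int.cast_abs]
      exact_mod_cast h6
    have hcB2 : x3 * x4 ≤ (B:ℝ) := by
      have h6 : |x.2.1| * |x.2.2| ≤ |c x| := by
        have h7 : |a₂ * x.2.1 * x.2.2| ≤ |c x| := by
          have : |a₃ * y₀.1 * y₀.2| = |c x| := by
            rw [← abs_neg (c x), ← hceq]; ring_nf
          rw [← this]; exact hle2
        have := Int.one_le_abs ha₂
        have h8 : |a₂ * x.2.1 * x.2.2| = |a₂| * (|x.2.1| * |x.2.2|) := by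
          rw [abs_mul, abs_mul]; ring
        have h9 : |x.2.1| * |x.2.2| ≤ |a₂| * (|x.2.1| * |x.2.2|) :=
          le_mul_of_one_le_left (by positivity) this
        linarith
      rw [hBc, hx3def, hx4def, ← Int.cast_abs, ← Int.cast_abs, ← Int.cast_abs]
      exact_mod_cast h6
    have hBP : Pr ≤ (B:ℝ) * (B:ℝ) := by
      have : Pr = (x1 * x2) * (x3 * x4) := by rw [hPrdef]; ring
      rw [this]
      exact mul_le_mul hcB1 hcB2 (by nlinarith) hBpos.le
    -- key exponent inequality
    have hkey : (B:ℝ) ^ δ * (B:ℝ) ^ (-σ) ≤ Pr ^ ((δ - σ) / 2) := by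
      have e1 : Pr ^ ((σ - δ) / 2) ≤ ((B:ℝ) * (B:ℝ)) ^ ((σ - δ) / 2) :=
        Real.rpow_le_rpow hPr0.le hBP (by linarith)
      have e2 : ((B:ℝ) * (B:ℝ)) ^ ((σ - δ) / 2) = (B:ℝ) ^ (σ - δ) := by
        rw [Real.mul_rpow hBpos.le hBpos.le, ← Real.rpow_add hBpos]
        ring_nf
      have e3 : (B:ℝ) ^ δ * (B:ℝ) ^ (-σ) = ((B:ℝ) ^ (σ - δ))⁻¹ := by
        rw [← Real.rpow_add hBpos, show δ + -σ = -(σ - δ) by ring,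
          Real.rpow_neg hBpos.le]
      have e4 : Pr ^ ((δ - σ) / 2) = (Pr ^ ((σ - δ) / 2))⁻¹ := by
        rw [show (δ - σ) / 2 = -((σ - δ) / 2) by ring, Real.rpow_neg hPr0.le]
      rw [e3, e4]
      exact inv_anti₀ (by positivity) (e1.trans_eq e2)
    have hfin : rp σ x.1.1 * rp σ x.1.2 * rp σ x.2.1 * rp σ x.2.2 *
        ((B:ℝ) ^ δ * (B:ℝ) ^ (-σ))
        ≤ (rp s x.1.1 * rp s x.1.2) * (rp s x.2.1 * rp s x.2.2) := by
      have h9 : (0:ℝ) ≤ Pr ^ (-σ) := Real.rpow_nonneg hPr0.le _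
      calc rp σ x.1.1 * rp σ x.1.2 * rp σ x.2.1 * rp σ x.2.2 *
            ((B:ℝ) ^ δ * (B:ℝ) ^ (-σ))
          = Pr ^ (-σ) * ((B:ℝ) ^ δ * (B:ℝ) ^ (-σ)) := by rw [hP4 σ]
        _ ≤ Pr ^ (-σ) * Pr ^ ((δ - σ) / 2) := mul_le_mul_of_nonneg_left hkey h9
        _ = Pr ^ (-s) := by
            rw [← Real.rpow_add hPr0]
            congr 1
            rw [hsdef]; ring
        _ = (rp s x.1.1 * rp s x.1.2) * (rp s x.2.1 * rp s x.2.2) := by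
            rw [hP4 s]; ring
    -- main chain
    calc ∑' y, Fc a₁ a₂ a₃ σ (x, y)
        = ∑ y ∈ box x, Fc a₁ a₂ a₃ σ (x, y) :=
          tsum_eq_sum (fun y hy => by by_contra h; exact hy (hsupp x y h))
      _ = ∑ y ∈ T, Fc a₁ a₂ a₃ σ (x, y) := (Finset.sum_filter_ne_zero (box x)).symm
      _ ≤ T.card • bound := Finset.sum_le_card_nsmul _ _ _ hper
      _ = (T.card : ℝ) * bound := nsmul_eq_mul _ _
      _ ≤ (2 * (B.divisors.card : ℝ)) * bound := mul_le_mul_of_nonneg_right hTcard hbound0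
      _ ≤ (2 * (C * (B:ℝ) ^ δ)) * bound := by
          apply mul_le_mul_of_nonneg_right _ hbound0
          have := hC B hB0
          linarith
      _ ≤ H x := by
          rw [hbounddef, hHdef]
          calc 2 * (C * (B:ℝ) ^ δ) *
                (rp σ x.1.1 * rp σ x.1.2 * rp σ x.2.1 * rp σ x.2.2 *
                  ((B:ℝ) ^ (-σ) * A ^ σ))
              = 2 * C * A ^ σ *
                (rp σ x.1.1 * rp σ x.1.2 * rp σ x.2.1 * rp σ x.2.2 *
                  ((B:ℝ) ^ δ * (B:ℝ) ^ (-σ))) := by ring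
            _ ≤ 2 * C * A ^ σ *
                ((rp s x.1.1 * rp s x.1.2) * (rp s x.2.1 * rp s x.2.2)) := by
                apply mul_le_mul_of_nonneg_left hfin
                have : (0:ℝ) ≤ A ^ σ := Real.rpow_nonneg hA0.le _
                nlinarith

def perm3 : ((ℤ × ℤ × ℤ) × (ℤ × ℤ × ℤ)) → (((ℤ × ℤ) × (ℤ × ℤ)) × (ℤ × ℤ)) :=
  fun v => (((v.1.1, v.2.1), (v.1.2.1, v.2.2.1)), (v.1.2.2, v.2.2.2))

def perm1 : ((ℤ × ℤ × ℤ) × (ℤ × ℤ × ℤ)) → (((ℤ × ℤ) × (ℤ × ℤ)) × (ℤ × ℤ)) :=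
  fun v => (((v.1.2.1, v.2.2.1), (v.1.2.2, v.2.2.2)), (v.1.1, v.2.1))

def perm2 : ((ℤ × ℤ × ℤ) × (ℤ × ℤ × ℤ)) → (((ℤ × ℤ) × (ℤ × ℤ)) × (ℤ × ℤ)) :=
  fun v => (((v.1.2.2, v.2.2.2), (v.1.1, v.2.1)), (v.1.2.1, v.2.2.1))

lemma perm3_inj : Function.Injective perm3 := by
  rintro ⟨⟨a, b, c⟩, d, e, f⟩ ⟨⟨a', b', c'⟩, d', e', f'⟩ h
  simp only [perm3, Prod.mk.injEq] at h
  obtain ⟨⟨⟨rfl, rfl⟩, rfl, rfl⟩, rfl, rfl⟩ := h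
  rfl

lemma perm1_inj : Function.Injective perm1 := by
  rintro ⟨⟨a, b, c⟩, d, e, f⟩ ⟨⟨a', b', c'⟩, d', e', f'⟩ h
  simp only [perm1, Prod.mk.injEq] at h
  obtain ⟨⟨⟨rfl, rfl⟩, rfl, rfl⟩, rfl, rfl⟩ := h
  rfl

lemma perm2_inj : Function.Injective perm2 := by
  rintro ⟨⟨a, b, c⟩, d, e, f⟩ ⟨⟨a', b', c'⟩, d', e', f'⟩ h
  simp only [perm2, Prod.mk.injEq] at h
  obtain ⟨⟨⟨rfl, rfl⟩, rfl, rfl⟩, rfl, rfl⟩ := h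
  rfl

lemma norm_cpow_int_abs {n : ℤ} (hn : n ≠ 0) (γ : ℂ) :
    ‖((|n| : ℤ) : ℂ) ^ γ‖ = |(n : ℝ)| ^ γ.re := by
  have h1 : ((|n| : ℤ) : ℂ) = ((|(n : ℝ)| : ℝ) : ℂ) := by
    rw [← Int.cast_abs]
    norm_cast
  rw [h1,
    Complex.norm_cpow_eq_rpow_re_of_pos (abs_pos.mpr (Int.cast_ne_zero.mpr hn))]

lemma one_le_rpow_of_one_le {x t : ℝ} (hx : 1 ≤ x) (ht : 0 ≤ t) : 1 ≤ x ^ t := by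
  calc (1 : ℝ) = x ^ (0 : ℝ) := (Real.rpow_zero x).symm
    _ ≤ x ^ t := Real.rpow_le_rpow_of_exponent_le hx ht

set_option maxHeartbeats 2000000 in
/-- Absolute convergence of the parabolic Eisenstein series `𝒜_a(α, β)` in the
range `Re(αᵢ), Re(βᵢ) > 2/3`.  Here `v.1 = (n₁, n₂, n₃)` and `v.2 = (m₁, m₂, m₃)`,
and `|n|^α` denotes the principal complex power of the positive real `|n|`. -/
theorem statement6 (a₁ a₂ a₃ : ℤ) (ha₁ : a₁ ≠ 0) (ha₂ : a₂ ≠ 0) (ha₃ : a₃ ≠ 0)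
    (α₁ α₂ α₃ β₁ β₂ β₃ : ℂ)
    (hα₁ : 2 / 3 < α₁.re) (hα₂ : 2 / 3 < α₂.re) (hα₃ : 2 / 3 < α₃.re)
    (hβ₁ : 2 / 3 < β₁.re) (hβ₂ : 2 / 3 < β₂.re) (hβ₃ : 2 / 3 < β₃.re) :
    Summable (fun v : {v : (ℤ × ℤ × ℤ) × (ℤ × ℤ × ℤ) //
        v.1.1 ≠ 0 ∧ v.1.2.1 ≠ 0 ∧ v.1.2.2 ≠ 0 ∧
        v.2.1 ≠ 0 ∧ v.2.2.1 ≠ 0 ∧ v.2.2.2 ≠ 0 ∧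
        a₁ * v.1.1 * v.2.1 + a₂ * v.1.2.1 * v.2.2.1 + a₃ * v.1.2.2 * v.2.2.2 = 0} =>
      1 / (((|v.val.1.1| : ℤ) : ℂ) ^ α₁ * ((|v.val.2.1| : ℤ) : ℂ) ^ β₁ *
        ((|v.val.1.2.1| : ℤ) : ℂ) ^ α₂ * ((|v.val.2.2.1| : ℤ) : ℂ) ^ β₂ *
        ((|v.val.1.2.2| : ℤ) : ℂ) ^ α₃ * ((|v.val.2.2.2| : ℤ) : ℂ) ^ β₃)) := by
  classical
  set σ : ℝ := min (min α₁.re (min α₂.re α₃.re)) (min β₁.re (min β₂.re β₃.re)) with hσdef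
  have hσ : 2 / 3 < σ := by
    rw [hσdef]
    simp only [lt_min_iff]
    exact ⟨⟨hα₁, hα₂, hα₃⟩, hβ₁, hβ₂, hβ₃⟩
  have hσ0 : 0 ≤ σ := by linarith
  have hσα₁ : σ ≤ α₁.re := le_trans (min_le_left _ _) (min_le_left _ _)
  have hσα₂ : σ ≤ α₂.re :=
    le_trans (min_le_left _ _) (le_trans (min_le_right _ _) (min_le_left _ _))
  have hσα₃ : σ ≤ α₃.re :=
    le_trans (min_le_left _ _) (le_trans (min_le_right _ _) (min_le_right _ _))
  have hσβ₁ : σ ≤ β₁.re := le_trans (min_le_right _ _) (min_le_left _ _)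
  have hσβ₂ : σ ≤ β₂.re :=
    le_trans (min_le_right _ _) (le_trans (min_le_right _ _) (min_le_left _ _))
  have hσβ₃ : σ ≤ β₃.re :=
    le_trans (min_le_right _ _) (le_trans (min_le_right _ _) (min_le_right _ _))
  apply Summable.of_norm
  have s1 : Summable (fun v : {v : (ℤ × ℤ × ℤ) × (ℤ × ℤ × ℤ) //
      v.1.1 ≠ 0 ∧ v.1.2.1 ≠ 0 ∧ v.1.2.2 ≠ 0 ∧
      v.2.1 ≠ 0 ∧ v.2.2.1 ≠ 0 ∧ v.2.2.2 ≠ 0 ∧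
      a₁ * v.1.1 * v.2.1 + a₂ * v.1.2.1 * v.2.2.1 + a₃ * v.1.2.2 * v.2.2.2 = 0} =>
      Fc a₂ a₃ a₁ σ (perm1 v.val)) :=
    (core_summable a₂ a₃ a₁ ha₂ ha₃ ha₁ σ hσ).comp_injective
      (perm1_inj.comp Subtype.val_injective)
  have s2 : Summable (fun v : {v : (ℤ × ℤ × ℤ) × (ℤ × ℤ × ℤ) //
      v.1.1 ≠ 0 ∧ v.1.2.1 ≠ 0 ∧ v.1.2.2 ≠ 0 ∧
      v.2.1 ≠ 0 ∧ v.2.2.1 ≠ 0 ∧ v.2.2.2 ≠ 0 ∧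
      a₁ * v.1.1 * v.2.1 + a₂ * v.1.2.1 * v.2.2.1 + a₃ * v.1.2.2 * v.2.2.2 = 0} =>
      Fc a₃ a₁ a₂ σ (perm2 v.val)) :=
    (core_summable a₃ a₁ a₂ ha₃ ha₁ ha₂ σ hσ).comp_injective
      (perm2_inj.comp Subtype.val_injective)
  have s3 : Summable (fun v : {v : (ℤ × ℤ × ℤ) × (ℤ × ℤ × ℤ) //
      v.1.1 ≠ 0 ∧ v.1.2.1 ≠ 0 ∧ v.1.2.2 ≠ 0 ∧
      v.2.1 ≠ 0 ∧ v.2.2.1 ≠ 0 ∧ v.2.2.2 ≠ 0 ∧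
      a₁ * v.1.1 * v.2.1 + a₂ * v.1.2.1 * v.2.2.1 + a₃ * v.1.2.2 * v.2.2.2 = 0} =>
      Fc a₁ a₂ a₃ σ (perm3 v.val)) :=
    (core_summable a₁ a₂ a₃ ha₁ ha₂ ha₃ σ hσ).comp_injective
      (perm3_inj.comp Subtype.val_injective)
  apply Summable.of_nonneg_of_le (fun v => norm_nonneg _) _ ((s1.add s2).add s3)
  intro v
  obtain ⟨hn1, hn2, hn3, hm1, hm2, hm3, heq⟩ := v.2
  set n₁ : ℤ := v.val.1.1 with hdn₁
  set n₂ : ℤ := v.val.1.2.1 with hdn₂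
  set n₃ : ℤ := v.val.1.2.2 with hdn₃
  set m₁ : ℤ := v.val.2.1 with hdm₁
  set m₂ : ℤ := v.val.2.2.1 with hdm₂
  set m₃ : ℤ := v.val.2.2.2 with hdm₃
  have hx1 : (1:ℝ) ≤ |(n₁ : ℝ)| := one_le_abs_cast hn1
  have hx2 : (1:ℝ) ≤ |(m₁ : ℝ)| := one_le_abs_cast hm1
  have hx3 : (1:ℝ) ≤ |(n₂ : ℝ)| := one_le_abs_cast hn2
  have hx4 : (1:ℝ) ≤ |(m₂ : ℝ)| := one_le_abs_cast hm2
  have hx5 : (1:ℝ) ≤ |(n₃ : ℝ)| := one_le_abs_cast hn3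
  have hx6 : (1:ℝ) ≤ |(m₃ : ℝ)| := one_le_abs_cast hm3
  -- step 1 : compute the norm
  have hnorm : ‖1 / (((|n₁| : ℤ) : ℂ) ^ α₁ * ((|m₁| : ℤ) : ℂ) ^ β₁ *
      ((|n₂| : ℤ) : ℂ) ^ α₂ * ((|m₂| : ℤ) : ℂ) ^ β₂ *
      ((|n₃| : ℤ) : ℂ) ^ α₃ * ((|m₃| : ℤ) : ℂ) ^ β₃)‖
      = 1 / (|(n₁ : ℝ)| ^ α₁.re * |(m₁ : ℝ)| ^ β₁.re * |(n₂ : ℝ)| ^ α₂.re *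
        |(m₂ : ℝ)| ^ β₂.re * |(n₃ : ℝ)| ^ α₃.re * |(m₃ : ℝ)| ^ β₃.re) := by
    rw [norm_div, norm_one, norm_mul, norm_mul, norm_mul, norm_mul, norm_mul,
      norm_cpow_int_abs hn1, norm_cpow_int_abs hm1, norm_cpow_int_abs hn2,
      norm_cpow_int_abs hm2, norm_cpow_int_abs hn3, norm_cpow_int_abs hm3]
  rw [hnorm]
  -- step 2 : bound by the sigma-power product
  have hstep2 : 1 / (|(n₁ : ℝ)| ^ α₁.re * |(m₁ : ℝ)| ^ β₁.re * |(n₂ : ℝ)| ^ α₂.re *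
        |(m₂ : ℝ)| ^ β₂.re * |(n₃ : ℝ)| ^ α₃.re * |(m₃ : ℝ)| ^ β₃.re)
      ≤ rp σ n₁ * rp σ m₁ * rp σ n₂ * rp σ m₂ * rp σ n₃ * rp σ m₃ := by
    have hrw : rp σ n₁ * rp σ m₁ * rp σ n₂ * rp σ m₂ * rp σ n₃ * rp σ m₃
        = 1 / (|(n₁ : ℝ)| ^ σ * |(m₁ : ℝ)| ^ σ * |(n₂ : ℝ)| ^ σ * |(m₂ : ℝ)| ^ σ *
          |(n₃ : ℝ)| ^ σ * |(m₃ : ℝ)| ^ σ) := by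
      unfold rp
      rw [Real.rpow_neg (abs_nonneg _), Real.rpow_neg (abs_nonneg _),
        Real.rpow_neg (abs_nonneg _), Real.rpow_neg (abs_nonneg _),
        Real.rpow_neg (abs_nonneg _), Real.rpow_neg (abs_nonneg _)]
      field_simp
    rw [hrw]
    have r1 := Real.rpow_le_rpow_of_exponent_le hx1 hσα₁
    have r2 := Real.rpow_le_rpow_of_exponent_le hx2 hσβ₁
    have r3 := Real.rpow_le_rpow_of_exponent_le hx3 hσα₂
    have r4 := Real.rpow_le_rpow_of_exponent_le hx4 hσβ₂
    have r5 := Real.rpow_le_rpow_of_exponent_le hx5 hσα₃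
    have r6 := Real.rpow_le_rpow_of_exponent_le hx6 hσβ₃
    have o1 : (1:ℝ) ≤ |(n₁ : ℝ)| ^ σ := one_le_rpow_of_one_le hx1 hσ0
    have o2 : (1:ℝ) ≤ |(m₁ : ℝ)| ^ σ := one_le_rpow_of_one_le hx2 hσ0
    have o3 : (1:ℝ) ≤ |(n₂ : ℝ)| ^ σ := one_le_rpow_of_one_le hx3 hσ0
    have o4 : (1:ℝ) ≤ |(m₂ : ℝ)| ^ σ := one_le_rpow_of_one_le hx4 hσ0
    have o5 : (1:ℝ) ≤ |(n₃ : ℝ)| ^ σ := one_le_rpow_of_one_le hx5 hσ0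
    have o6 : (1:ℝ) ≤ |(m₃ : ℝ)| ^ σ := one_le_rpow_of_one_le hx6 hσ0
    have p2 : (1:ℝ) ≤ |(n₁ : ℝ)| ^ σ * |(m₁ : ℝ)| ^ σ := one_le_mul_of_one_le_of_one_le o1 o2
    have p3 : (1:ℝ) ≤ |(n₁ : ℝ)| ^ σ * |(m₁ : ℝ)| ^ σ * |(n₂ : ℝ)| ^ σ := one_le_mul_of_one_le_of_one_le p2 o3
    have p4 : (1:ℝ) ≤ |(n₁ : ℝ)| ^ σ * |(m₁ : ℝ)| ^ σ * |(n₂ : ℝ)| ^ σ * |(m₂ : ℝ)| ^ σ := one_le_mul_of_one_le_of_one_le p3 o4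
    have p5 : (1:ℝ) ≤ |(n₁ : ℝ)| ^ σ * |(m₁ : ℝ)| ^ σ * |(n₂ : ℝ)| ^ σ * |(m₂ : ℝ)| ^ σ *
        |(n₃ : ℝ)| ^ σ := one_le_mul_of_one_le_of_one_le p4 o5
    have p6 : (1:ℝ) ≤ |(n₁ : ℝ)| ^ σ * |(m₁ : ℝ)| ^ σ * |(n₂ : ℝ)| ^ σ * |(m₂ : ℝ)| ^ σ *
        |(n₃ : ℝ)| ^ σ * |(m₃ : ℝ)| ^ σ := one_le_mul_of_one_le_of_one_le p5 o6
    apply one_div_le_one_div_of_le (by linarith)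
    exact mul_le_mul (mul_le_mul (mul_le_mul (mul_le_mul (mul_le_mul r1 r2
      (Real.rpow_nonneg (abs_nonneg _) _) (by positivity)) r3
      (Real.rpow_nonneg (abs_nonneg _) _) (by positivity)) r4
      (Real.rpow_nonneg (abs_nonneg _) _) (by positivity)) r5
      (Real.rpow_nonneg (abs_nonneg _) _) (by positivity)) r6
      (Real.rpow_nonneg (abs_nonneg _) _) (by positivity)
  refine le_trans hstep2 ?_
  -- step 3 : the sigma product is bounded by the sum of the three pieces
  have hcases : (|a₁ * n₁ * m₁| ≤ |a₃ * n₃ * m₃| ∧ |a₂ * n₂ * m₂| ≤ |a₃ * n₃ * m₃|) ∨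
      (|a₂ * n₂ * m₂| ≤ |a₁ * n₁ * m₁| ∧ |a₃ * n₃ * m₃| ≤ |a₁ * n₁ * m₁|) ∨
      (|a₃ * n₃ * m₃| ≤ |a₂ * n₂ * m₂| ∧ |a₁ * n₁ * m₁| ≤ |a₂ * n₂ * m₂|) := by
    rcases le_total |a₁ * n₁ * m₁| |a₂ * n₂ * m₂| with h12 | h21 <;>
      rcases le_total |a₂ * n₂ * m₂| |a₃ * n₃ * m₃| with h23 | h32 <;>
      rcases le_total |a₁ * n₁ * m₁| |a₃ * n₃ * m₃| with h13 | h31 <;>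
      first
      | exact Or.inl ⟨by linarith, by linarith⟩
      | exact Or.inr (Or.inl ⟨by linarith, by linarith⟩)
      | exact Or.inr (Or.inr ⟨by linarith, by linarith⟩)
  have hF1 : 0 ≤ Fc a₂ a₃ a₁ σ (perm1 v.val) := Fc_nonneg _ _ _ _ _
  have hF2 : 0 ≤ Fc a₃ a₁ a₂ σ (perm2 v.val) := Fc_nonneg _ _ _ _ _
  have hF3 : 0 ≤ Fc a₁ a₂ a₃ σ (perm3 v.val) := Fc_nonneg _ _ _ _ _
  rcases hcases with ⟨h1, h2⟩ | ⟨h1, h2⟩ | ⟨h1, h2⟩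
  · have : Fc a₁ a₂ a₃ σ (perm3 v.val)
        = rp σ n₁ * rp σ m₁ * rp σ n₂ * rp σ m₂ * rp σ n₃ * rp σ m₃ := by
      unfold Fc perm3
      dsimp only
      rw [if_pos ⟨hn1, hm1, hn2, hm2, hn3, hm3, heq, h1, h2⟩]
    linarith
  · have : Fc a₂ a₃ a₁ σ (perm1 v.val)
        = rp σ n₂ * rp σ m₂ * rp σ n₃ * rp σ m₃ * rp σ n₁ * rp σ m₁ := by
      unfold Fc perm1
      dsimp only
      rw [if_pos ⟨hn2, hm2, hn3, hm3, hn1, hm1,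
        by show a₂ * n₂ * m₂ + a₃ * n₃ * m₃ + a₁ * n₁ * m₁ = 0; linarith, h1, h2⟩]
    have heqt : rp σ n₂ * rp σ m₂ * rp σ n₃ * rp σ m₃ * rp σ n₁ * rp σ m₁
        = rp σ n₁ * rp σ m₁ * rp σ n₂ * rp σ m₂ * rp σ n₃ * rp σ m₃ := by ring
    linarith
  · have : Fc a₃ a₁ a₂ σ (perm2 v.val)
        = rp σ n₃ * rp σ m₃ * rp σ n₁ * rp σ m₁ * rp σ n₂ * rp σ m₂ := by
      unfold Fc perm2
      dsimp only
      rw [if_pos ⟨hn3, hm3, hn1, hm1, hn2, hm2,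
        by show a₃ * n₃ * m₃ + a₁ * n₁ * m₁ + a₂ * n₂ * m₂ = 0; linarith, h1, h2⟩]
    have heqt : rp σ n₃ * rp σ m₃ * rp σ n₁ * rp σ m₁ * rp σ n₂ * rp σ m₂
        = rp σ n₁ * rp σ m₁ * rp σ n₂ * rp σ m₂ * rp σ n₃ * rp σ m₃ := by ring
    linarith
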